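/- Let r ≥ 2 and μ ∈ P̄_k. For 1 ≤ m ≤ r−1 the m-fold Hecke transformation is given explicitly by H^m(μ)_j = k − μ_{r−m} + μ_{r−m+j} for 1 ≤ j ≤ m, and H^m(μ)_j = μ_{j−m} − μ_{r−m} for m < j ≤ r; moreover H^r(μ) = (μ_1−μ_r, μ_2−μ_r, …, μ_{r−1}−μ_r, 0). -/
import Mathlib


open scoped BigOperators
open Complex

noncomputable section

namespace VerlindePaper

/-- The Schur value `S_λ(z₁,…,z_r) = det(z_j^{λ_i+r-i}) / det(z_j^{r-i})`
(indices `i` are 0-based, so the exponent is `λ i + (r - 1 - i)`). -/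
noncomputable def schur {r : ℕ} (lam : Fin r → ℤ) (z : Fin r → ℂ) : ℂ :=
  Matrix.det (Matrix.of fun i j : Fin r => z j ^ (lam i + ((r : ℤ) - 1 - (i : ℕ)))) /
    Matrix.det (Matrix.of fun i j : Fin r => z j ^ ((r : ℤ) - 1 - (i : ℕ)))

/-- `ζ_v = (e^{2πi v_1/(r+k)}, …, e^{2πi v_r/(r+k)})`. -/
noncomputable def zeta (r k : ℕ) (v : Fin r → ℤ) : Fin r → ℂ :=
  fun j => Complex.exp (2 * (Real.pi : ℂ) * Complex.I * (v j : ℂ) / ((r : ℂ) + (k : ℂ)))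

/-- `D(v) = ∏_{i<j} (2 sin(π(v_i - v_j)/(r+k)))²`. -/
noncomputable def Dv (r k : ℕ) (v : Fin r → ℤ) : ℝ :=
  ∏ p ∈ Finset.univ.filter (fun p : Fin r × Fin r => p.1 < p.2),
    (2 * Real.sin (Real.pi * ((v p.1 : ℝ) - (v p.2 : ℝ)) / ((r : ℝ) + (k : ℝ)))) ^ 2

/-- `P̄_k = {μ : 0 ≤ μ_r ≤ ⋯ ≤ μ_1 ≤ k}` (0-based: `μ 0 = μ_1`). -/
def Pbar (r k : ℕ) : Finset (Fin r → ℤ) :=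
  (Finset.Icc 0 (fun _ => (k : ℤ))).filter (fun μ => ∀ i j : Fin r, i ≤ j → μ j ≤ μ i)

/-- `P_k = {μ : 0 ≤ μ_r ≤ ⋯ ≤ μ_1 ≤ k-1}`. -/
def Pk (r k : ℕ) : Finset (Fin r → ℤ) :=
  (Finset.Icc 0 (fun _ => (k : ℤ) - 1)).filter (fun μ => ∀ i j : Fin r, i ≤ j → μ j ≤ μ i)

/-- `W_k = {μ ∈ P̄_k : μ_r = 0}`. -/
def Wk (r k : ℕ) : Finset (Fin r → ℤ) :=
  (Pbar r k).filter (fun μ => ∀ i : Fin r, (i : ℕ) = r - 1 → μ i = 0)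

/-- `μ* = (k - μ_r, k - μ_{r-1}, …, k - μ_1)`. -/
def mustar (k : ℕ) {r : ℕ} (μ : Fin r → ℤ) : Fin r → ℤ :=
  fun i => (k : ℤ) - μ i.rev

/-- `μ ∼ ν` iff `μ - ν` is a constant vector. -/
def sim {r : ℕ} (μ ν : Fin r → ℤ) : Prop := ∃ a : ℤ, ∀ i, μ i = ν i + a

/-- The index set of the Verlinde sums: integer vectors with
`0 = v_r < v_{r-1} < ⋯ < v_1 < r + k`. -/
def Vset (r k : ℕ) : Finset (Fin r → ℤ) :=
  (Finset.Icc 0 (fun _ => (r : ℤ) + (k : ℤ) - 1)).filter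
    (fun v => (∀ i j : Fin r, i < j → v j < v i) ∧ ∀ i : Fin r, (i : ℕ) = r - 1 → v i = 0)

/-- The Verlinde number `V_g(r,d,(λ_x)_{x∈I})`. -/
noncomputable def verlinde (r k : ℕ) (g : ℕ) (d : ℤ) {I : Type*} [Fintype I]
    (lam : I → Fin r → ℤ) : ℂ :=
  (-1 : ℂ) ^ (d * ((r : ℤ) - 1)) * ((k : ℂ) / (r : ℂ)) ^ g *
    ((r : ℂ) * ((r : ℂ) + (k : ℂ)) ^ (r - 1)) ^ ((g : ℤ) - 1) *
    ∑ v ∈ Vset r k,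
      Complex.exp (2 * (Real.pi : ℂ) * Complex.I *
          ((d : ℂ) / (r : ℂ) -
            (∑ x, ∑ i, (lam x i : ℂ)) / ((r : ℂ) * ((r : ℂ) + (k : ℂ)))) *
          (∑ i, (v i : ℂ))) *
        (∏ x, schur (lam x) (zeta r k v)) * ((Dv r k v : ℂ)) ^ (1 - (g : ℤ))

/-- The Hecke transformation
`H¹(μ) = (k - μ_{r-1} + μ_r, μ_1 - μ_{r-1}, …, μ_{r-2} - μ_{r-1}, 0)`. -/
def H1 (k : ℕ) {r : ℕ} (μ : Fin r → ℤ) : Fin r → ℤ := fun j =>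
  have hj : (j : ℕ) < r := j.isLt
  if (j : ℕ) = 0 then (k : ℤ) - μ ⟨r - 2, by omega⟩ + μ ⟨r - 1, by omega⟩
  else μ ⟨(j : ℕ) - 1, by omega⟩ - μ ⟨r - 2, by omega⟩

/-- The iterated Hecke transformation `H^m = H¹ ∘ ⋯ ∘ H¹`. -/
def Hm (k : ℕ) {r : ℕ} (m : ℕ) (μ : Fin r → ℤ) : Fin r → ℤ := (H1 k)^[m] μ

/-- `μ ∈ Y(λ, ω_s)`: `μ` is a partition obtained from `λ` by adding `s` boxes,
no two in the same row. -/
def inY {r : ℕ} (lam : Fin r → ℤ) (s : ℕ) (μ : Fin r → ℤ) : Prop :=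
  (∀ i j : Fin r, i ≤ j → μ j ≤ μ i) ∧ (∀ i, μ i - lam i = 0 ∨ μ i - lam i = 1) ∧
    (∑ i, μ i) = (∑ i, lam i) + (s : ℤ)

/-- The Vandermonde product `Δ(z) = ∏_{i<j} (z_i - z_j)`. -/
noncomputable def vand {r : ℕ} (z : Fin r → ℂ) : ℂ :=
  ∏ p ∈ Finset.univ.filter (fun p : Fin r × Fin r => p.1 < p.2), (z p.1 - z p.2)

/-- `J_v(t) = Σ_{τ ∈ S_r} sgn(τ) exp(2πi (Σ_j v_{τ(j)} t_j)/(r+k))`. -/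
noncomputable def Jv (r k : ℕ) (v : Fin r → ℤ) (t : Fin r → Fin (r + k)) : ℂ :=
  ∑ τ : Equiv.Perm (Fin r), ((Equiv.Perm.sign τ : ℤ) : ℂ) *
    Complex.exp (2 * (Real.pi : ℂ) * Complex.I *
      (∑ j, (v (τ j) : ℂ) * ((t j : ℕ) : ℂ)) / ((r : ℂ) + (k : ℂ)))


lemma Hm_formula (r k : ℕ) (hr : 2 ≤ r) (μ : Fin r → ℤ) :
    ∀ m : ℕ, 1 ≤ m → m ≤ r - 1 → ∀ jv : ℕ, ∀ hjv : jv < r,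
      Hm k m μ ⟨jv, hjv⟩ =
        if h : jv < m then
          (k : ℤ) - μ ⟨r - m - 1, by omega⟩ + μ ⟨r - m + jv, by omega⟩
        else μ ⟨jv - m, by omega⟩ - μ ⟨r - m - 1, by omega⟩ := by
  intro m
  induction m with
  | zero => omega
  | succ m ih =>
    intro _ hm jv hjv
    rcases Nat.eq_zero_or_pos m with hm0 | hm1
    · subst hm0
      show (H1 k)^[1] μ _ = _
      rw [Function.iterate_one]
      simp only [H1, Fin.val_mk]
      by_cases hj0 : jv = 0
      · rw [if_pos hj0, dif_pos (by omega)]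
        subst hj0
        congr 2 <;> exact Fin.ext (by simp) <;> omega
      · rw [if_neg hj0, dif_neg (by omega)]
        congr 2 <;> exact Fin.ext (by simp)
    · have hstep : Hm k (m + 1) μ ⟨jv, hjv⟩ = H1 k (Hm k m μ) ⟨jv, hjv⟩ := by
        show (H1 k)^[m + 1] μ _ = _
        rw [Function.iterate_succ_apply']
        rfl
      rw [hstep]
      have key := fun jv hjv => ih hm1 (by omega) jv hjv
      simp only [H1, Fin.val_mk]
      by_cases hj0 : jv = 0
      · rw [if_pos hj0, dif_pos (by omega)]
        rw [key (r - 2) (by omega), key (r - 1) (by omega)]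
        rw [dif_neg (by omega), dif_neg (by omega)]
        have e1 : (⟨r - 2 - m, by omega⟩ : Fin r) = ⟨r - (m+1) - 1, by omega⟩ :=
          Fin.ext (by simp; omega)
        have e2 : (⟨r - 1 - m, by omega⟩ : Fin r) = ⟨r - m - 1, by omega⟩ :=
          Fin.ext (by simp; omega)
        have e3 : (⟨r - (m+1) + jv, by omega⟩ : Fin r) = ⟨r - m - 1, by omega⟩ :=
          Fin.ext (by simp; omega)
        rw [e1, e2, e3]
        ring
      · rw [if_neg hj0]
        rw [key (jv - 1) (by omega), key (r - 2) (by omega)]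
        rw [dif_neg (show ¬ r - 2 < m by omega)]
        by_cases hjm : jv < m + 1
        · rw [dif_pos (by omega), dif_pos hjm]
          have e1 : (⟨r - 2 - m, by omega⟩ : Fin r) = ⟨r - (m+1) - 1, by omega⟩ :=
            Fin.ext (by simp; omega)
          have e2 : (⟨r - m + (jv - 1), by omega⟩ : Fin r) = ⟨r - (m+1) + jv, by omega⟩ :=
            Fin.ext (by simp; omega)
          rw [e1, e2]
          ring
        · rw [dif_neg (by omega), dif_neg hjm]
          have e1 : (⟨r - 2 - m, by omega⟩ : Fin r) = ⟨r - (m+1) - 1, by omega⟩ :=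
            Fin.ext (by simp; omega)
          have e2 : (⟨jv - 1 - m, by omega⟩ : Fin r) = ⟨jv - (m+1), by omega⟩ :=
            Fin.ext (by simp; omega)
          rw [e1, e2]
          ring


/-- explicit formula for the iterated Hecke transformation `H^m(μ)`
(`j` is 0-based here, so 1-based `1 ≤ j ≤ m` becomes `(j:ℕ) < m`). -/
theorem Hm_apply (r k : ℕ) (hr : 2 ≤ r) (hk : 1 ≤ k)
    (μ : Fin r → ℤ) (hμ : μ ∈ Pbar r k) :
    (∀ m : ℕ, 1 ≤ m → ∀ hm : m ≤ r - 1, ∀ j : Fin r,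
        (∀ hj : (j : ℕ) < m,
          Hm k m μ j =
            (k : ℤ) - μ ⟨r - m - 1, by omega⟩ +
              μ ⟨r - m + (j : ℕ), by have := j.isLt; omega⟩) ∧
        (m ≤ (j : ℕ) →
          Hm k m μ j =
            μ ⟨(j : ℕ) - m, by have := j.isLt; omega⟩ - μ ⟨r - m - 1, by omega⟩)) ∧
      ∀ j : Fin r, Hm k r μ j = μ j - μ ⟨r - 1, by omega⟩ := by
  constructor
  · intro m hm1 hm j
    have key := Hm_formula r k hr μ m hm1 hm (j : ℕ) j.isLt
    constructor
    · intro hj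
      have : Hm k m μ j = Hm k m μ ⟨(j : ℕ), j.isLt⟩ := rfl
      rw [this, key, dif_pos hj]
    · intro hj
      have : Hm k m μ j = Hm k m μ ⟨(j : ℕ), j.isLt⟩ := rfl
      rw [this, key, dif_neg (by omega)]
  · intro j
    have hj := j.isLt
    have h := Function.iterate_succ_apply' (H1 k) (r - 1) μ
    rw [show (r - 1).succ = r from by omega] at h
    have hstep : Hm k r μ j = H1 k (Hm k (r - 1) μ) j := by
      show (H1 k)^[r] μ j = _
      rw [h]
      rfl
    rw [hstep]
    have key := fun jv hjv => Hm_formula r k hr μ (r - 1) (by omega) le_rfl jv hjv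
    simp only [H1, Fin.val_mk]
    by_cases hj0 : (j : ℕ) = 0
    · rw [if_pos hj0]
      rw [key (r - 2) (by omega), key (r - 1) (by omega)]
      rw [dif_pos (by omega), dif_neg (by omega)]
      have e1 : (⟨r - (r - 1) - 1, by omega⟩ : Fin r) = j := Fin.ext (by simp; omega)
      have e2 : (⟨r - (r - 1) + (r - 2), by omega⟩ : Fin r) = ⟨r - 1, by omega⟩ :=
        Fin.ext (by simp; omega)
      have e3 : (⟨r - 1 - (r - 1), by omega⟩ : Fin r) = j := Fin.ext (by simp; omega)
      rw [e1, e2, e3]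
      ring
    · rw [if_neg hj0]
      rw [key ((j : ℕ) - 1) (by omega), key (r - 2) (by omega)]
      rw [dif_pos (by omega), dif_pos (by omega)]
      have e1 : (⟨r - (r - 1) - 1, by omega⟩ : Fin r) = ⟨r - (r - 1) - 1, by omega⟩ := rfl
      have e2 : (⟨r - (r - 1) + ((j : ℕ) - 1), by omega⟩ : Fin r) = j :=
        Fin.ext (by simp; omega)
      have e3 : (⟨r - (r - 1) + (r - 2), by omega⟩ : Fin r) = ⟨r - 1, by omega⟩ :=
        Fin.ext (by simp; omega)
      rw [e2, e3]
      ring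

end VerlindePaper
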